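/- Let d ≥ 1, let f : ℝ^d → ℝ be a Schwartz function, let (ξ_x)_{x∈ℤ^d} be i.i.d. random vectors in ℝ^d, and let U be uniformly distributed on [−1/2, 1/2]^d, independent of (ξ_x)_{x∈ℤ^d}. Then for every k ∈ ℕ, both E[(Σ_{x∈ℤ^d} |f|(x + ξ_x + U))^k] < ∞ and E[(Σ_{x∈ℤ^d} |f|(x + ξ_x))^k] < ∞. -/

import Mathlib

open MeasureTheory ProbabilityTheory Filter Real Topology

noncomputable section

/-- The lattice point `x ∈ ℤ^d` viewed in `ℝ^d`. -/
def latticePt (d : ℕ) (x : Fin d → ℤ) : EuclideanSpace ℝ (Fin d) := WithLp.toLp 2 (fun i => (x i : ℝ))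

lemma aux_tsum_pi_prod (d : ℕ) (c : ℤ → ENNReal) :
    ∑' x : Fin d → ℤ, ∏ i, c (x i) = (∑' n : ℤ, c n) ^ d := by
  induction d with
  | zero =>
      rw [pow_zero]
      rw [tsum_eq_single (fun _ => 0) (by intro b hb; exact absurd (funext fun i => i.elim0) hb)]
      simp
  | succ d ih =>
      rw [← (Fin.consEquiv (fun _ => ℤ)).tsum_eq, ENNReal.tsum_prod']
      have : ∀ (a : ℤ) (g : Fin d → ℤ),
          (∏ i, c (((Fin.consEquiv (fun _ => ℤ)) (a, g)) i)) = c a * ∏ i, c (g i) := by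
        intro a g
        rw [Fin.prod_univ_succ]
        simp [Fin.consEquiv]
      simp_rw [this, ENNReal.tsum_mul_left, ENNReal.tsum_mul_right, ih, pow_succ']

lemma aux_summable_int : Summable (fun n : ℤ => ((1 + |(n : ℝ)|) ^ 2)⁻¹) := by
  have h : Summable (fun n : ℕ => ((1 + (n : ℝ)) ^ 2)⁻¹) := by
    have h2 : Summable (fun n : ℕ => ((n : ℝ) ^ 2)⁻¹) := Real.summable_nat_pow_inv.2 one_lt_two
    apply ((summable_nat_add_iff 1).2 h2).of_nonneg_of_le (fun n => by positivity)
    intro n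
    gcongr
    push_cast
    linarith
  apply Summable.of_nat_of_neg
  · simpa using h
  · apply h.congr
    intro n
    norm_num

lemma aux_schwartz_bound (d : ℕ) (f : SchwartzMap (EuclideanSpace ℝ (Fin d)) ℝ) :
    ∃ B : ENNReal, B ≠ ⊤ ∧
      ∀ w : EuclideanSpace ℝ (Fin d),
        ∑' x : Fin d → ℤ, (‖f (latticePt d x + w)‖₊ : ENNReal) ≤ B := by
  classical
  set D : ℝ := 2 ^ (2*d) * (Finset.Iic (2*d, 0)).sup (schwartzSeminormFamily ℝ _ _) f with hDdef
  have hD : ∀ y, (1 + ‖y‖) ^ (2*d) * ‖f y‖ ≤ D := by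
    intro y
    have h := SchwartzMap.one_add_le_sup_seminorm_apply (𝕜 := ℝ) (m := (2*d, 0)) le_rfl le_rfl f y
    simp only [norm_iteratedFDeriv_zero] at h
    exact h
  have hD0 : 0 ≤ D := le_trans (by positivity) (hD 0)
  set K : ℝ := D * (1 + Real.sqrt d) ^ (2*d) with hKdef
  have hK0 : 0 ≤ K := by positivity
  have coord : ∀ (v : EuclideanSpace ℝ (Fin d)) (i : Fin d), |v i| ≤ ‖v‖ := by
    intro v i
    rw [EuclideanSpace.norm_eq]
    calc |v i| = Real.sqrt (‖v i‖ ^ 2) := by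
          rw [Real.sqrt_sq_eq_abs, Real.norm_eq_abs, abs_abs]
    _ ≤ Real.sqrt (∑ j, ‖v j‖ ^ 2) := Real.sqrt_le_sqrt
        (Finset.single_le_sum (f := fun j => ‖v j‖ ^ 2) (fun j _ => sq_nonneg _)
          (Finset.mem_univ i))
  have claim1 : ∀ (t : EuclideanSpace ℝ (Fin d)), ‖t‖ ≤ Real.sqrt d →
      ∀ x : Fin d → ℤ, ‖f (latticePt d x + t)‖ ≤ K * ∏ i, (((1 + |(x i : ℝ)|) ^ 2)⁻¹) := by
    intro t ht x
    set X := latticePt d x with hX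
    set P : ℝ := ∏ i, (1 + |(x i : ℝ)|) with hP
    have hP1 : 1 ≤ P := by
      rw [hP]
      calc (1:ℝ) = ∏ _i : Fin d, 1 := by simp
      _ ≤ ∏ i, (1 + |(x i : ℝ)|) := Finset.prod_le_prod (fun i _ => by norm_num)
          (fun i _ => by linarith [abs_nonneg ((x i : ℝ))])
    have hP0 : 0 < P := lt_of_lt_of_le one_pos hP1
    have h1 : P ≤ (1 + ‖X‖) ^ d := by
      rw [hP]
      calc ∏ i, (1 + |(x i : ℝ)|) ≤ ∏ _i : Fin d, (1 + ‖X‖) :=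
            Finset.prod_le_prod (fun i _ => by positivity)
              (fun i _ => by
                have := coord X i
                have hXi : |(x i : ℝ)| = |X i| := rfl
                rw [hXi]
                linarith)
      _ = (1 + ‖X‖) ^ d := by rw [Finset.prod_const, Finset.card_univ, Fintype.card_fin]
    have h2 : 1 + ‖X‖ ≤ (1 + ‖t‖) * (1 + ‖X + t‖) := by
      have h3 : ‖X‖ ≤ ‖X + t‖ + ‖t‖ := by
        calc ‖X‖ = ‖(X + t) - t‖ := by rw [add_sub_cancel_right]
        _ ≤ ‖X + t‖ + ‖t‖ := norm_sub_le _ _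
      have h4 : 0 ≤ ‖t‖ := norm_nonneg _
      have h5 : 0 ≤ ‖X + t‖ := norm_nonneg _
      nlinarith
    have hparen : 0 ≤ 1 + ‖X‖ := by positivity
    have h6 : P ^ 2 ≤ (1 + ‖X‖) ^ (2*d) := by
      calc P ^ 2 ≤ ((1 + ‖X‖) ^ d) ^ 2 := pow_le_pow_left₀ (le_of_lt hP0) h1 2
      _ = (1 + ‖X‖) ^ (2*d) := by rw [← pow_mul, mul_comm]
    have h7 : (1 + ‖X‖) ^ (2*d) ≤ (1 + Real.sqrt d) ^ (2*d) * (1 + ‖X + t‖) ^ (2*d) := by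
      calc (1 + ‖X‖) ^ (2*d) ≤ ((1 + ‖t‖) * (1 + ‖X + t‖)) ^ (2*d) :=
            pow_le_pow_left₀ hparen h2 _
      _ = (1 + ‖t‖) ^ (2*d) * (1 + ‖X + t‖) ^ (2*d) := mul_pow _ _ _
      _ ≤ (1 + Real.sqrt d) ^ (2*d) * (1 + ‖X + t‖) ^ (2*d) :=
            mul_le_mul_of_nonneg_right
              (pow_le_pow_left₀ (by positivity) (by linarith) _) (by positivity)
    have key : ‖f (X + t)‖ * P ^ 2 ≤ K := by
      have hf0 : 0 ≤ ‖f (X + t)‖ := norm_nonneg _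
      calc ‖f (X + t)‖ * P ^ 2
          ≤ ‖f (X + t)‖ * ((1 + Real.sqrt d) ^ (2*d) * (1 + ‖X + t‖) ^ (2*d)) :=
            mul_le_mul_of_nonneg_left (h6.trans h7) hf0
        _ = ((1 + ‖X + t‖) ^ (2*d) * ‖f (X + t)‖) * (1 + Real.sqrt d) ^ (2*d) := by ring
        _ ≤ D * (1 + Real.sqrt d) ^ (2*d) :=
            mul_le_mul_of_nonneg_right (hD _) (by positivity)
        _ = K := rfl
    have hP2 : P ^ 2 = ∏ i, (1 + |(x i : ℝ)|) ^ 2 := by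
      rw [hP]; exact (Finset.prod_pow _ _ _).symm
    have hprod : (∏ i, (((1 + |(x i : ℝ)|) ^ 2)⁻¹)) = (P ^ 2)⁻¹ := by
      rw [hP2]; exact Finset.prod_inv_distrib _
    rw [hprod, ← div_eq_mul_inv, le_div_iff₀ (by positivity : (0:ℝ) < P ^ 2)]
    exact key
  -- sum of the inverse-square products over the lattice
  set Bz : ENNReal := ∑' n : ℤ, ENNReal.ofReal (((1 + |(n : ℝ)|) ^ 2)⁻¹) with hBz
  have hBzfin : Bz ≠ ⊤ := by
    rw [hBz, ← ENNReal.ofReal_tsum_of_nonneg (fun n => by positivity) aux_summable_int]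
    exact ENNReal.ofReal_ne_top
  refine ⟨ENNReal.ofReal K * Bz ^ d, by
    exact ENNReal.mul_ne_top ENNReal.ofReal_ne_top (ENNReal.pow_ne_top hBzfin), ?_⟩
  intro w
  set m : Fin d → ℤ := fun i => ⌊w i⌋ with hm
  set t : EuclideanSpace ℝ (Fin d) := w - latticePt d m with htdef
  have ht : ‖t‖ ≤ Real.sqrt d := by
    rw [EuclideanSpace.norm_eq]
    have : ∀ i, ‖t i‖ ^ 2 ≤ 1 := by
      intro i
      have hti : t i = Int.fract (w i) := by
        show w i - ((⌊w i⌋ : ℤ) : ℝ) = Int.fract (w i)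
        rw [Int.fract]
      rw [Real.norm_eq_abs, hti, abs_of_nonneg (Int.fract_nonneg _)]
      nlinarith [Int.fract_lt_one (w i), Int.fract_nonneg (w i)]
    calc Real.sqrt (∑ i, ‖t i‖ ^ 2) ≤ Real.sqrt (∑ _i : Fin d, (1:ℝ)) := by
          apply Real.sqrt_le_sqrt; exact Finset.sum_le_sum fun i _ => this i
    _ = Real.sqrt d := by simp
  have hre : ∀ x : Fin d → ℤ, latticePt d (x - m) + w = latticePt d x + t := by
    intro x
    ext i
    show ((x i - m i : ℤ) : ℝ) + w i = (x i : ℝ) + (w i - (m i : ℝ))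
    push_cast
    ring
  calc ∑' x : Fin d → ℤ, (‖f (latticePt d x + w)‖₊ : ENNReal)
      = ∑' x : Fin d → ℤ, (‖f (latticePt d (x - m) + w)‖₊ : ENNReal) :=
        ((Equiv.subRight m).tsum_eq (fun x => (‖f (latticePt d x + w)‖₊ : ENNReal))).symm
    _ = ∑' x : Fin d → ℤ, (‖f (latticePt d x + t)‖₊ : ENNReal) := by
        apply tsum_congr; intro x; rw [hre x]
    _ ≤ ∑' x : Fin d → ℤ, (ENNReal.ofReal K * ∏ i, ENNReal.ofReal (((1 + |(x i : ℝ)|) ^ 2)⁻¹)) := by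
        apply ENNReal.tsum_le_tsum
        intro x
        rw [← ENNReal.ofReal_coe_nnreal, coe_nnnorm]
        calc ENNReal.ofReal ‖f (latticePt d x + t)‖
            ≤ ENNReal.ofReal (K * ∏ i, (((1 + |(x i : ℝ)|) ^ 2)⁻¹)) :=
              ENNReal.ofReal_le_ofReal (claim1 t ht x)
          _ = ENNReal.ofReal K * ∏ i, ENNReal.ofReal (((1 + |(x i : ℝ)|) ^ 2)⁻¹) := by
              rw [ENNReal.ofReal_mul hK0, ENNReal.ofReal_prod_of_nonneg (fun i _ => by positivity)]
    _ = ENNReal.ofReal K * Bz ^ d := by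
        rw [ENNReal.tsum_mul_left, aux_tsum_pi_prod d (fun n => ENNReal.ofReal (((1 + |(n : ℝ)|) ^ 2)⁻¹))]

lemma aux_pow_add_le (k : ℕ) (p q : ENNReal) : (p + q) ^ k ≤ 2 ^ k * (p ^ k + q ^ k) := by
  rcases le_total p q with h | h
  · have h2 : p + q ≤ 2 * q := by rw [two_mul]; exact add_le_add_left h q
    calc (p + q) ^ k ≤ (2 * q) ^ k := pow_le_pow_left' h2 k
    _ = 2 ^ k * q ^ k := mul_pow _ _ _
    _ ≤ 2 ^ k * (p ^ k + q ^ k) := mul_le_mul_right le_add_self _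
  · have h2 : p + q ≤ 2 * p := by rw [two_mul]; exact add_le_add_right h p
    calc (p + q) ^ k ≤ (2 * p) ^ k := pow_le_pow_left' h2 k
    _ = 2 ^ k * p ^ k := mul_pow _ _ _
    _ ≤ 2 ^ k * (p ^ k + q ^ k) := mul_le_mul_right le_self_add _

lemma aux_moment_bound {Ω : Type*} [MeasureSpace Ω] [IsProbabilityMeasure (ℙ : Measure Ω)]
    (d : ℕ) (f : SchwartzMap (EuclideanSpace ℝ (Fin d)) ℝ)
    (ξ : (Fin d → ℤ) → Ω → EuclideanSpace ℝ (Fin d))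
    (hmeas : ∀ x, Measurable (ξ x))
    (hindep : iIndepFun ξ ℙ)
    (hident : ∀ x, IdentDistrib (ξ x) (ξ 0) ℙ ℙ) (k : ℕ) :
    ∃ C : ENNReal, C ≠ ⊤ ∧ ∀ u : EuclideanSpace ℝ (Fin d),
      ∫⁻ ω, (∑' x : Fin d → ℤ, (‖f (latticePt d x + ξ x ω + u)‖₊ : ENNReal)) ^ k ∂ℙ ≤ C := by
  classical
  obtain ⟨B, hBfin, hB⟩ := aux_schwartz_bound d f
  set a : (Fin d → ℤ) → EuclideanSpace ℝ (Fin d) → Ω → ENNReal :=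
    fun x u ω => (‖f (latticePt d x + ξ x ω + u)‖₊ : ENNReal) with ha
  have hφmeas : ∀ (x : Fin d → ℤ) (u : EuclideanSpace ℝ (Fin d)),
      Measurable (fun v : EuclideanSpace ℝ (Fin d) =>
        (‖f (latticePt d x + v + u)‖₊ : ENNReal)) := by
    intro x u
    apply Measurable.coe_nnreal_ennreal
    apply Measurable.nnnorm
    exact f.continuous.measurable.comp ((measurable_const_add _).add_const u)
  have meas_a : ∀ x u, Measurable (a x u) := fun x u => (hφmeas x u).comp (hmeas x)
  set T : EuclideanSpace ℝ (Fin d) → Ω → ENNReal := fun u ω => ∑' x, a x u ω with hT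
  have meas_T : ∀ u, Measurable (T u) := fun u => Measurable.ennreal_tsum fun x => meas_a x u
  have haB : ∀ x u ω, a x u ω ≤ B := by
    intro x u ω
    calc a x u ω = (‖f (latticePt d x + (ξ x ω + u))‖₊ : ENNReal) := by rw [ha]; simp [add_assoc]
    _ ≤ ∑' x' : Fin d → ℤ, (‖f (latticePt d x' + (ξ x ω + u))‖₊ : ENNReal) := ENNReal.le_tsum x
    _ ≤ B := hB _
  set b : (Fin d → ℤ) → EuclideanSpace ℝ (Fin d) → ENNReal :=
    fun x u => ∫⁻ ω, a x u ω ∂ℙ with hb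
  have hbsum : ∀ u, ∑' x, b x u ≤ B := by
    intro u
    set μ := Measure.map (ξ 0) ℙ with hμ
    haveI : IsProbabilityMeasure μ := Measure.isProbabilityMeasure_map (hmeas 0).aemeasurable
    have hbx : ∀ x, b x u = ∫⁻ v, (‖f (latticePt d x + v + u)‖₊ : ENNReal) ∂μ := by
      intro x
      rw [hμ, ← (hident x).map_eq, lintegral_map (hφmeas x u) (hmeas x)]
    calc ∑' x, b x u = ∑' x, ∫⁻ v, (‖f (latticePt d x + v + u)‖₊ : ENNReal) ∂μ :=
          tsum_congr hbx
    _ = ∫⁻ v, ∑' x, (‖f (latticePt d x + v + u)‖₊ : ENNReal) ∂μ :=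
          (lintegral_tsum fun x => (hφmeas x u).aemeasurable).symm
    _ ≤ ∫⁻ _v, B ∂μ := lintegral_mono fun v => by
          simp_rw [add_assoc]
          exact hB (v + u)
    _ = B := by simp
  induction k with
  | zero => exact ⟨1, ENNReal.one_ne_top, fun u => by simp⟩
  | succ k ih =>
    obtain ⟨C, hCfin, hC⟩ := ih
    refine ⟨2 ^ k * (B ^ k + C) * B, ?_, ?_⟩
    · exact ENNReal.mul_ne_top (ENNReal.mul_ne_top
        (ENNReal.pow_ne_top ENNReal.ofNat_ne_top)
        (ENNReal.add_ne_top.2 ⟨ENNReal.pow_ne_top hBfin, hCfin⟩)) hBfin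
    intro u
    set S : (Fin d → ℤ) → Ω → ENNReal :=
      fun x ω => ∑' y, if y = x then 0 else a y u ω with hS
    have meas_S : ∀ x, Measurable (S x) := by
      intro x
      apply Measurable.ennreal_tsum
      intro y
      by_cases hy : y = x
      · simp [hy]
      · simpa [hy] using meas_a y u
    have hTfun : ∀ ω, T u ω = ∑' x, a x u ω := fun ω => by rw [hT]
    have hSfun : ∀ x ω, S x ω = ∑' y, if y = x then 0 else a y u ω := fun x ω => by rw [hS]
    have hTsplit : ∀ x ω, T u ω = a x u ω + S x ω := by
      intro x ω
      rw [hTfun, hSfun]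
      rw [ENNReal.tsum_eq_add_tsum_ite x]
      congr 1
      exact tsum_congr fun y => by by_cases h : y = x <;> simp [h]
    have hS_le : ∀ x ω, S x ω ≤ T u ω := by
      intro x ω
      rw [hTfun, hSfun]
      apply ENNReal.tsum_le_tsum
      intro y
      by_cases hy : y = x <;> simp [hy]
    -- independence step
    have h_le : ∀ y, MeasurableSpace.comap (ξ y) inferInstance ≤
        (inferInstance : MeasurableSpace Ω) := fun y => measurable_iff_comap_le.mp (hmeas y)
    have hind : ∀ x, ∫⁻ ω, a x u ω * (S x ω) ^ k ∂ℙ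
        = b x u * ∫⁻ ω, (S x ω) ^ k ∂ℙ := by
      intro x
      have hindepσ : Indep (MeasurableSpace.comap (ξ x) inferInstance)
          (⨆ y ∈ ({x}ᶜ : Set (Fin d → ℤ)),
            MeasurableSpace.comap (ξ y) inferInstance) ℙ := by
        have h := ProbabilityTheory.indep_biSup_compl h_le hindep {x}
        rwa [iSup_singleton] at h
      have hmf : Measurable[MeasurableSpace.comap (ξ x) inferInstance] (a x u) :=
        (hφmeas x u).comp (Measurable.of_comap_le le_rfl)
      have hmg : Measurable[⨆ y ∈ ({x}ᶜ : Set (Fin d → ℤ)),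
          MeasurableSpace.comap (ξ y) inferInstance] (fun ω => (S x ω) ^ k) := by
        apply Measurable.pow_const
        apply Measurable.ennreal_tsum
        intro y
        by_cases hy : y = x
        · simp only [if_pos hy]
          exact measurable_const
        · simp only [if_neg hy]
          have hyx : y ∈ ({x}ᶜ : Set (Fin d → ℤ)) := by simpa using hy
          exact (hφmeas y u).comp (Measurable.of_comap_le
            (le_iSup₂ (f := fun y (_ : y ∈ ({x}ᶜ : Set (Fin d → ℤ))) =>
              MeasurableSpace.comap (ξ y) inferInstance) y hyx))
      exact lintegral_mul_eq_lintegral_mul_lintegral_of_independent_measurableSpace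
        (h_le x) (iSup₂_le fun y _ => h_le y) hindepσ hmf hmg
    -- per-x bound
    have perx : ∀ x, ∫⁻ ω, a x u ω * T u ω ^ k ∂ℙ ≤ 2 ^ k * (B ^ k + C) * b x u := by
      intro x
      have hpt : ∀ ω, a x u ω * T u ω ^ k
          ≤ 2 ^ k * (a x u ω * B ^ k + a x u ω * (S x ω) ^ k) := by
        intro ω
        calc a x u ω * T u ω ^ k = a x u ω * (a x u ω + S x ω) ^ k := by rw [hTsplit x ω]
        _ ≤ a x u ω * (B + S x ω) ^ k := by
            gcongr
            exact haB x u ω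
        _ ≤ a x u ω * (2 ^ k * (B ^ k + (S x ω) ^ k)) :=
            mul_le_mul_right (aux_pow_add_le k B (S x ω)) _
        _ = 2 ^ k * (a x u ω * B ^ k + a x u ω * (S x ω) ^ k) := by ring
      calc ∫⁻ ω, a x u ω * T u ω ^ k ∂ℙ
          ≤ ∫⁻ ω, 2 ^ k * (a x u ω * B ^ k + a x u ω * (S x ω) ^ k) ∂ℙ :=
            lintegral_mono hpt
        _ = 2 ^ k * (∫⁻ ω, a x u ω * B ^ k ∂ℙ + ∫⁻ ω, a x u ω * (S x ω) ^ k ∂ℙ) := by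
            rw [lintegral_const_mul _ (f := fun ω => a x u ω * B ^ k + a x u ω * (S x ω) ^ k) (((meas_a x u).mul_const _).add
              ((meas_a x u).mul ((meas_S x).pow_const k))),
              lintegral_add_left ((meas_a x u).mul_const _)]
        _ = 2 ^ k * (b x u * B ^ k + b x u * ∫⁻ ω, (S x ω) ^ k ∂ℙ) := by
            rw [lintegral_mul_const _ (meas_a x u), hind x]
        _ ≤ 2 ^ k * (b x u * B ^ k + b x u * C) := by
            gcongr
            calc ∫⁻ ω, (S x ω) ^ k ∂ℙ ≤ ∫⁻ ω, T u ω ^ k ∂ℙ :=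
                  lintegral_mono fun ω => pow_le_pow_left' (hS_le x ω) k
            _ ≤ C := hC u
        _ = 2 ^ k * (B ^ k + C) * b x u := by ring
    calc ∫⁻ ω, T u ω ^ (k + 1) ∂ℙ = ∫⁻ ω, ∑' x, a x u ω * T u ω ^ k ∂ℙ := by
          apply lintegral_congr
          intro ω
          calc T u ω ^ (k + 1) = T u ω * T u ω ^ k := by ring
          _ = ∑' x, a x u ω * T u ω ^ k := by
              rw [hTfun ω]
              exact ENNReal.tsum_mul_right.symm
      _ = ∑' x, ∫⁻ ω, a x u ω * T u ω ^ k ∂ℙ :=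
          lintegral_tsum fun x => ((meas_a x u).mul ((meas_T u).pow_const k)).aemeasurable
      _ ≤ ∑' x, 2 ^ k * (B ^ k + C) * b x u := ENNReal.tsum_le_tsum perx
      _ = 2 ^ k * (B ^ k + C) * ∑' x, b x u := ENNReal.tsum_mul_left
      _ ≤ 2 ^ k * (B ^ k + C) * B := mul_le_mul_right (hbsum u) _

theorem statement15
    {Ω : Type*} [MeasureSpace Ω] [IsProbabilityMeasure (ℙ : Measure Ω)]
    (d : ℕ) (hd : 1 ≤ d)
    (f : SchwartzMap (EuclideanSpace ℝ (Fin d)) ℝ)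
    (ξ : (Fin d → ℤ) → Ω → EuclideanSpace ℝ (Fin d))
    (hmeas : ∀ x, Measurable (ξ x))
    (hindep : iIndepFun ξ ℙ)
    (hident : ∀ x, IdentDistrib (ξ x) (ξ 0) ℙ ℙ)
    (U : Ω → EuclideanSpace ℝ (Fin d)) (hU : Measurable U)
    -- `U` is uniform on the box `[-1/2, 1/2]^d`
    (hUnif : Measure.map U ℙ = volume.restrict
      {y : EuclideanSpace ℝ (Fin d) | ∀ i, y i ∈ Set.Icc (-(1 : ℝ)/2) (1/2)})
    -- `U` is independent of the family `(ξ_x)`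
    (hUindep : IndepFun (fun ω => fun x => ξ x ω) U ℙ)
    (k : ℕ) :
    (∫⁻ ω, (∑' x : Fin d → ℤ,
        (‖f (latticePt d x + ξ x ω + U ω)‖₊ : ENNReal)) ^ k ∂ℙ < ⊤) ∧
    (∫⁻ ω, (∑' x : Fin d → ℤ,
        (‖f (latticePt d x + ξ x ω)‖₊ : ENNReal)) ^ k ∂ℙ < ⊤) := by
  obtain ⟨C, hCfin, hC⟩ := aux_moment_bound d f ξ hmeas hindep hident k
  constructor
  · have hΞ : Measurable (fun ω => fun x => ξ x ω) :=
      measurable_pi_lambda _ hmeas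
    haveI : IsProbabilityMeasure (Measure.map (fun ω => fun x => ξ x ω) ℙ) :=
      Measure.isProbabilityMeasure_map hΞ.aemeasurable
    haveI : IsProbabilityMeasure (Measure.map U ℙ) :=
      Measure.isProbabilityMeasure_map hU.aemeasurable
    set H : ((Fin d → ℤ) → EuclideanSpace ℝ (Fin d)) × EuclideanSpace ℝ (Fin d) → ENNReal :=
      fun p => (∑' x : Fin d → ℤ, (‖f (latticePt d x + p.1 x + p.2)‖₊ : ENNReal)) ^ k with hH
    have hHmeas : Measurable H := by
      apply Measurable.pow_const
      apply Measurable.ennreal_tsum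
      intro x
      apply Measurable.coe_nnreal_ennreal
      apply Measurable.nnnorm
      apply f.continuous.measurable.comp
      exact (measurable_const.add ((measurable_pi_apply x).comp measurable_fst)).add
        measurable_snd
    have hmap : Measure.map (fun ω => ((fun x => ξ x ω), U ω)) ℙ
        = (Measure.map (fun ω => fun x => ξ x ω) ℙ).prod (Measure.map U ℙ) :=
      (indepFun_iff_map_prod_eq_prod_map_map hΞ.aemeasurable hU.aemeasurable).mp hUindep
    have hcalc : ∫⁻ ω, (∑' x : Fin d → ℤ,
        (‖f (latticePt d x + ξ x ω + U ω)‖₊ : ENNReal)) ^ k ∂ℙ ≤ C := by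
      calc ∫⁻ ω, (∑' x : Fin d → ℤ,
          (‖f (latticePt d x + ξ x ω + U ω)‖₊ : ENNReal)) ^ k ∂ℙ
          = ∫⁻ ω, H ((fun x => ξ x ω), U ω) ∂ℙ := by
            apply lintegral_congr
            intro ω
            rw [hH]
        _ = ∫⁻ p, H p ∂(Measure.map (fun ω => ((fun x => ξ x ω), U ω)) ℙ) :=
            (lintegral_map hHmeas (hΞ.prodMk hU)).symm
        _ = ∫⁻ p, H p
            ∂((Measure.map (fun ω => fun x => ξ x ω) ℙ).prod (Measure.map U ℙ)) := by
            rw [hmap]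
        _ = ∫⁻ u, ∫⁻ t, H (t, u) ∂(Measure.map (fun ω => fun x => ξ x ω) ℙ)
            ∂(Measure.map U ℙ) := lintegral_prod_symm H hHmeas.aemeasurable
        _ ≤ ∫⁻ _u, C ∂(Measure.map U ℙ) := by
            apply lintegral_mono
            intro u
            show (∫⁻ t, H (t, u) ∂(Measure.map (fun ω => fun x => ξ x ω) ℙ)) ≤ C
            have h1 : ∫⁻ t, H (t, u) ∂(Measure.map (fun ω => fun x => ξ x ω) ℙ)
                = ∫⁻ ω, H ((fun x => ξ x ω), u) ∂ℙ :=
              lintegral_map (hHmeas.comp (measurable_id.prodMk measurable_const)) hΞ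
            rw [h1]
            have h2 : ∫⁻ ω, H ((fun x => ξ x ω), u) ∂ℙ
                = ∫⁻ ω, (∑' x : Fin d → ℤ,
                    (‖f (latticePt d x + ξ x ω + u)‖₊ : ENNReal)) ^ k ∂ℙ := by
              apply lintegral_congr
              intro ω
              rw [hH]
            rw [h2]
            exact hC u
        _ = C := by simp
    exact lt_of_le_of_lt hcalc (lt_top_iff_ne_top.2 hCfin)
  · have h0 := hC 0
    simp only [add_zero] at h0
    exact lt_of_le_of_lt h0 (lt_top_iff_ne_top.2 hCfin)
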